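/- arXiv:2405.20942 — 3 statements merged into one kernel-verified Lean document; each statement's English description precedes it below -/
import Mathlib

section
/- Let K be a field of characteristic zero and n ≥ 1. The product · on gl(n,K) × gl(n,K) defined by (a₀Iₙ+A₀, a₁Iₙ+A₁)·(b₀Iₙ+B₀, b₁Iₙ+B₁) = (a₀b₀Iₙ + a₀B₀ + b₀A₀ , (a₀b₁ + a₁b₀ + tr(A₀B₁ + A₁B₀) − (2/n)tr(A₀B₀))Iₙ + a₀B₁ + b₀A₁ + A₀B₀ + B₀A₀) (for scalars a₀,a₁,b₀,b₁ ∈ K and traceless A₀,A₁,B₀,B₁ ∈ Mₙ(K)) is associative: (P·Q)·R = P·(Q·R) for all P, Q, R ∈ gl(n,K) × gl(n,K). -/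
/-- The product `·` on `gl(n,K) × gl(n,K)`.  Each matrix `X` is decomposed (uniquely,
in characteristic zero) as `X = x₀Iₙ + X₀` with `x₀ = tr(X)/n` and `X₀` traceless, and
then `(a₀Iₙ+A₀, a₁Iₙ+A₁)·(b₀Iₙ+B₀, b₁Iₙ+B₁) = (a₀b₀Iₙ + a₀B₀ + b₀A₀ ,
(a₀b₁ + a₁b₀ + tr(A₀B₁ + A₁B₀) − (2/n)tr(A₀B₀))Iₙ + a₀B₁ + b₀A₁ + A₀B₀ + B₀A₀)`. -/
noncomputable def glPairMul {K : Type*} [Field K] (n : ℕ)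
    (P Q : Matrix (Fin n) (Fin n) K × Matrix (Fin n) (Fin n) K) :
    Matrix (Fin n) (Fin n) K × Matrix (Fin n) (Fin n) K :=
  let a₀ : K := P.1.trace / n
  let A₀ := P.1 - a₀ • (1 : Matrix (Fin n) (Fin n) K)
  let a₁ : K := P.2.trace / n
  let A₁ := P.2 - a₁ • (1 : Matrix (Fin n) (Fin n) K)
  let b₀ : K := Q.1.trace / n
  let B₀ := Q.1 - b₀ • (1 : Matrix (Fin n) (Fin n) K)
  let b₁ : K := Q.2.trace / n
  let B₁ := Q.2 - b₁ • (1 : Matrix (Fin n) (Fin n) K)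
  ((a₀ * b₀) • (1 : Matrix (Fin n) (Fin n) K) + a₀ • B₀ + b₀ • A₀,
   (a₀ * b₁ + a₁ * b₀ + (A₀ * B₁ + A₁ * B₀).trace
      - (2 / (n : K)) * (A₀ * B₀).trace) • (1 : Matrix (Fin n) (Fin n) K)
     + a₀ • B₁ + b₀ • A₁ + A₀ * B₀ + B₀ * A₀)

lemma glPairMul_eq {K : Type*} [Field K] {n : ℕ} (hn : (n : K) ≠ 0)
    (a a' b b' : K) (A A' B B' : Matrix (Fin n) (Fin n) K)
    (hA : A.trace = 0) (hA' : A'.trace = 0) (hB : B.trace = 0) (hB' : B'.trace = 0) :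
    glPairMul n (a • 1 + A, a' • 1 + A') (b • 1 + B, b' • 1 + B') =
      ((a * b) • (1 : Matrix (Fin n) (Fin n) K) + a • B + b • A,
       (a * b' + a' * b + (A * B' + A' * B).trace
          - (2 / (n : K)) * (A * B).trace) • (1 : Matrix (Fin n) (Fin n) K)
         + a • B' + b • A' + A * B + B * A) := by
  have key : ∀ (c : K) (C : Matrix (Fin n) (Fin n) K), C.trace = 0 →
      (c • (1 : Matrix (Fin n) (Fin n) K) + C).trace / n = c := by
    intro c C hC
    simp [Matrix.trace_add, Matrix.trace_smul, hC, Matrix.trace_one]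
    field_simp
  unfold glPairMul
  simp only [key a A hA, key a' A' hA', key b B hB, key b' B' hB', add_sub_cancel_left]

/-- Let `K` be a field of characteristic zero and `n ≥ 1`.  The product
`·` on `gl(n,K) × gl(n,K)` is associative: `(P·Q)·R = P·(Q·R)` for all `P, Q, R`. -/
theorem glPairMul_assoc {K : Type*} [Field K] [CharZero K] (n : ℕ) (hn : 1 ≤ n)
    (P Q R : Matrix (Fin n) (Fin n) K × Matrix (Fin n) (Fin n) K) :
    glPairMul n (glPairMul n P Q) R = glPairMul n P (glPairMul n Q R) := by
  have hn0 : (n : K) ≠ 0 := Nat.cast_ne_zero.mpr (by omega)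
  obtain ⟨P1, P2⟩ := P; obtain ⟨Q1, Q2⟩ := Q; obtain ⟨R1, R2⟩ := R
  have decomp : ∀ X : Matrix (Fin n) (Fin n) K,
      ∃ (x : K) (Xt : Matrix (Fin n) (Fin n) K), X = x • (1 : Matrix (Fin n) (Fin n) K) + Xt ∧ Xt.trace = 0 := by
    intro X
    refine ⟨X.trace / n, X - (X.trace / n) • 1, by abel, ?_⟩
    simp [Matrix.trace_sub, Matrix.trace_smul, Matrix.trace_one]
    field_simp; ring
  obtain ⟨a, A, rfl, hA⟩ := decomp P1
  obtain ⟨a', A', rfl, hA'⟩ := decomp P2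
  obtain ⟨b, B, rfl, hB⟩ := decomp Q1
  obtain ⟨b', B', rfl, hB'⟩ := decomp Q2
  obtain ⟨c, C, rfl, hC⟩ := decomp R1
  obtain ⟨c', C', rfl, hC'⟩ := decomp R2
  rw [glPairMul_eq hn0 a a' b b' A A' B B' hA hA' hB hB',
      glPairMul_eq hn0 b b' c c' B B' C C' hB hB' hC hC']
  -- rewrite both intermediate results into normalized form
  have hL : ((a * b) • (1 : Matrix (Fin n) (Fin n) K) + a • B + b • A,
      (a * b' + a' * b + (A * B' + A' * B).trace
        - (2 / (n : K)) * (A * B).trace) • (1 : Matrix (Fin n) (Fin n) K)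
        + a • B' + b • A' + A * B + B * A) =
      ((a * b) • (1 : Matrix (Fin n) (Fin n) K) + (a • B + b • A),
       (a * b' + a' * b + (A * B' + A' * B).trace) • (1 : Matrix (Fin n) (Fin n) K)
        + (a • B' + b • A' + A * B + B * A
            - ((2 / (n : K)) * (A * B).trace) • (1 : Matrix (Fin n) (Fin n) K))) := by
    refine Prod.ext (by rw [add_assoc]) ?_
    simp only [sub_smul, add_smul]
    abel
  have hR : ((b * c) • (1 : Matrix (Fin n) (Fin n) K) + b • C + c • B,
      (b * c' + b' * c + (B * C' + B' * C).trace
        - (2 / (n : K)) * (B * C).trace) • (1 : Matrix (Fin n) (Fin n) K)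
        + b • C' + c • B' + B * C + C * B) =
      ((b * c) • (1 : Matrix (Fin n) (Fin n) K) + (b • C + c • B),
       (b * c' + b' * c + (B * C' + B' * C).trace) • (1 : Matrix (Fin n) (Fin n) K)
        + (b • C' + c • B' + B * C + C * B
            - ((2 / (n : K)) * (B * C).trace) • (1 : Matrix (Fin n) (Fin n) K))) := by
    refine Prod.ext (by rw [add_assoc]) ?_
    simp only [sub_smul, add_smul]
    abel
  rw [hL, hR]
  rw [glPairMul_eq hn0 (a * b) (a * b' + a' * b + (A * B' + A' * B).trace)
      c c' (a • B + b • A)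
      (a • B' + b • A' + A * B + B * A - ((2 / (n : K)) * (A * B).trace) • 1) C C'
      (by simp [Matrix.trace_smul, hA, hB])
      (by simp [Matrix.trace_add, Matrix.trace_sub, Matrix.trace_smul, hA', hB',
            Matrix.trace_one, Matrix.trace_mul_comm B A]
          field_simp; ring)
      hC hC',
    glPairMul_eq hn0 a a' (b * c) (b * c' + b' * c + (B * C' + B' * C).trace)
      A A' (b • C + c • B)
      (b • C' + c • B' + B * C + C * B - ((2 / (n : K)) * (B * C).trace) • 1)
      hA hA'
      (by simp [Matrix.trace_smul, hB, hC])
      (by simp [Matrix.trace_add, Matrix.trace_sub, Matrix.trace_smul, hB', hC',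
            Matrix.trace_one, Matrix.trace_mul_comm C B]
          field_simp; ring)]
  refine Prod.ext ?_ ?_
  · dsimp only
    module
  · dsimp only
    simp only [Matrix.add_mul, Matrix.mul_add, Matrix.sub_mul, Matrix.mul_sub,
      Matrix.smul_mul, Matrix.mul_smul, smul_mul_assoc, mul_smul_comm,
      Matrix.one_mul, Matrix.mul_one, Matrix.trace_add, Matrix.trace_sub,
      Matrix.trace_smul, Matrix.trace_one, hA, hA', hB, hB', hC, hC',
      smul_eq_mul, mul_zero, zero_mul, add_zero, zero_add, smul_zero, sub_zero]
    simp only [← Matrix.mul_assoc]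
    rw [Matrix.trace_mul_cycle A C B]
    match_scalars <;> field_simp <;> ring
end

section
/- Let K be a field of characteristic zero and n ≥ 1. The semidirect-product bracket {(X,Y),(X',Y')} = ([X,X'] , [X,Y'] + [Y,X']) on gl(n,K) × gl(n,K) (where [·,·] is the matrix commutator) satisfies the Leibniz (Poisson) law with respect to the product ·: for all P, Q, R ∈ gl(n,K) × gl(n,K), {R, P·Q} = {R,P}·Q + P·{R,Q}. -/
/-- The semidirect-product bracket `{(X,Y),(X',Y')} = ([X,X'], [X,Y'] + [Y,X'])` on
`gl(n,K) × gl(n,K)`, where `[A,B] = AB − BA` is the matrix commutator. -/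
def glPairBracket {K : Type*} [Field K] (n : ℕ)
    (P Q : Matrix (Fin n) (Fin n) K × Matrix (Fin n) (Fin n) K) :
    Matrix (Fin n) (Fin n) K × Matrix (Fin n) (Fin n) K :=
  (P.1 * Q.1 - Q.1 * P.1,
   (P.1 * Q.2 - Q.2 * P.1) + (P.2 * Q.1 - Q.1 * P.2))

/-- Let `K` be a field of characteristic zero and `n ≥ 1`.  The
semidirect-product bracket on `gl(n,K) × gl(n,K)` satisfies the Leibniz (Poisson) law
with respect to the product `·`: for all `P, Q, R`, `{R, P·Q} = {R,P}·Q + P·{R,Q}`. -/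
theorem glPairBracket_leibniz {K : Type*} [Field K] [CharZero K] (n : ℕ) (hn : 1 ≤ n)
    (P Q R : Matrix (Fin n) (Fin n) K × Matrix (Fin n) (Fin n) K) :
    glPairBracket n R (glPairMul n P Q)
      = glPairMul n (glPairBracket n R P) Q + glPairMul n P (glPairBracket n R Q) := by
  have hcomm : ∀ A B : Matrix (Fin n) (Fin n) K, (A * B - B * A).trace = 0 := by
    intro A B; rw [Matrix.trace_sub, Matrix.trace_mul_comm, sub_self]
  have c1 : ∀ X Y : Matrix (Fin n) (Fin n) K,
      (X * (R.1 * Y)).trace = (R.1 * (Y * X)).trace := by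
    intro X Y; rw [Matrix.trace_mul_comm, mul_assoc]
  have c2 : ∀ X Y : Matrix (Fin n) (Fin n) K,
      (X * (Y * R.1)).trace = (R.1 * (X * Y)).trace := by
    intro X Y; rw [← mul_assoc X Y R.1, Matrix.trace_mul_comm]
  have c3 : ∀ X Y : Matrix (Fin n) (Fin n) K,
      (X * (R.2 * Y)).trace = (R.2 * (Y * X)).trace := by
    intro X Y; rw [Matrix.trace_mul_comm, mul_assoc]
  have c4 : ∀ X Y : Matrix (Fin n) (Fin n) K,
      (X * (Y * R.2)).trace = (R.2 * (X * Y)).trace := by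
    intro X Y; rw [← mul_assoc X Y R.2, Matrix.trace_mul_comm]
  have d1 : ∀ X : Matrix (Fin n) (Fin n) K, (X * R.1).trace = (R.1 * X).trace := fun X =>
    Matrix.trace_mul_comm X R.1
  have d2 : ∀ X : Matrix (Fin n) (Fin n) K, (X * R.2).trace = (R.2 * X).trace := fun X =>
    Matrix.trace_mul_comm X R.2
  simp only [glPairBracket, glPairMul]
  simp only [Matrix.trace_add, Matrix.trace_sub, hcomm, add_zero, zero_add, zero_div,
    zero_smul, sub_zero, zero_mul, mul_zero, smul_zero]
  rw [Prod.ext_iff]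
  simp only [Prod.fst_add, Prod.snd_add]
  constructor <;>
  · simp only [mul_add, add_mul, mul_sub, sub_mul, smul_mul_assoc, mul_smul_comm,
      smul_smul, smul_add, smul_sub, mul_one, one_mul, mul_assoc,
      Matrix.trace_add, Matrix.trace_sub, Matrix.trace_smul, smul_eq_mul,
      Matrix.trace_one, Fintype.card_fin, c1, c2, c3, c4, d1, d2]
    module
end

section
/- Let G be a group and K a field of characteristic zero. Let 𝔄 and 𝔅 be (not necessarily associative or unital) K-algebras on which G acts by algebra automorphisms, and let (Vᵢ)_{i∈I} be a family of K-linear G-representations. Suppose 𝔄 = ⊕_{r∈R} 𝔄_r and 𝔅 = ⊕_{x∈X} 𝔅_x are internal direct sums of G-invariant subspaces, with G-equivariant linear isomorphisms τᴬ_r : V_{ε_A(r)} ≅ 𝔄_r and τᴮ_x : V_{ε_B(x)} ≅ 𝔅_x for functions ε_A : R → I, ε_B : X → I. For each triple i₁,i₂,j ∈ I let (m^{i₁,i₂,j}_q)_{q=1,…,d^{i₁,i₂,j}} be a linearly independent finite family of G-equivariant linear maps V_{i₁} ⊗ V_{i₂} → V_j. Assume the multiplication of 𝔄 expands as μᴬ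 restricted to 𝔄_{r₁}⊗𝔄_{r₂} equals Σ_{s∈R} Σ_q c^{s,q}_{r₁,r₂} · τᴬ_s ∘ m^{ε_A(r₁),ε_A(r₂),ε_A(s)}_q ∘ (τᴬ_{r₁} ⊗ τᴬ_{r₂})⁻¹, and similarly the multiplication of 𝔅 restricted to 𝔅_{x₁}⊗𝔅_{x₂} equals Σ_{y∈X} Σ_q d^{y,q}_{x₁,x₂} · τᴮ_y ∘ m^{ε_B(x₁),ε_B(x₂),ε_B(y)}_q ∘ (τᴮ_{x₁} ⊗ τᴮ_{x₂})⁻¹, with only finitely many nonzero coefficients in each expansion. Let φ : 𝔄 → 𝔅 be the G-equivariant linear map determined by φ restricted to 𝔄_r equals Σ_{x∈X_r} f_{x,r} · τᴮ_x ∘ (τᴬ_r)⁻¹, where X_r = {x ∈ X : ε_B(x) = ε_A(r)} and for each r only finitely many f_{x,r} are nonzero. Then φ is an algebra homomorphism (φ(ab) = φ(a)φ(b) for all a,b ∈ 𝔄) if and only if for all r₁,r₂ ∈ R, all y ∈ X, and all q = 1,…,d^{ε_A(r₁),ε_A(r₂),ε_B(y)}: Σ_{s∈R_y} c^{s,q}_{r₁,r₂}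 f_{y,s} = Σ_{x₁∈X_{r₁}} Σ_{x₂∈X_{r₂}} d^{y,q}_{x₁,x₂} f_{x₁,r₁} f_{x₂,r₂}, where R_y = {s ∈ R : ε_A(s) = ε_B(y)}. -/
open scoped BigOperators

private lemma sum_subtype_eq_sum'' {α M : Type*} [AddCommMonoid M] (p : α → Prop)
    [DecidablePred p] (g : α → M) (t : Finset α)
    (h0 : ∀ a ∈ t, ¬ p a → g a = 0) :
    ∑ x ∈ t.subtype p, g x.1 = ∑ x ∈ t, g x := by
  have h1 : ∑ x ∈ t.subtype p, g x.1
      = ∑ x ∈ (t.subtype p).map (Function.Embedding.subtype p), g x := by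
    rw [Finset.sum_map]; rfl
  rw [h1, Finset.subtype_map]
  exact Finset.sum_filter_of_ne (by intro x hx hgx; by_contra hp; exact hgx (h0 x hx hp))

private lemma finsum_subtype_eq_sum'' {α M : Type*} [AddCommMonoid M] (p : α → Prop)
    [DecidablePred p] (g : α → M) (t : Finset α)
    (h : ∀ a, p a → g a ≠ 0 → a ∈ t)
    (h0 : ∀ a, ¬ p a → g a = 0) :
    ∑ᶠ x : Subtype p, g x.1 = ∑ x ∈ t, g x := by
  rw [finsum_eq_sum_of_support_subset (fun x : Subtype p => g x.1) (s := t.subtype p)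
    (by intro x hx
        rw [Finset.mem_coe, Finset.mem_subtype]
        exact h x.1 x.2 hx)]
  exact sum_subtype_eq_sum'' p g t (fun a _ hp => h0 a hp)

private lemma components_eq'' {ι M K : Type*} [DecidableEq ι] [Ring K] [AddCommGroup M]
    [Module K M] {p : ι → Submodule K M} (hind : iSupIndep p)
    (u v : ι → M) (hu : ∀ i, u i ∈ p i) (hv : ∀ i, v i ∈ p i)
    (t : Finset ι) (hut : ∀ i, u i ≠ 0 → i ∈ t) (hvt : ∀ i, v i ≠ 0 → i ∈ t)
    (h : ∑ i ∈ t, u i = ∑ i ∈ t, v i) : ∀ i, u i = v i := by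
  have hinj := hind.dfinsupp_lsum_injective
  have key : (∑ i ∈ t, DFinsupp.single i (⟨u i, hu i⟩ : p i) : Π₀ i, p i)
      = ∑ i ∈ t, DFinsupp.single i (⟨v i, hv i⟩ : p i) := by
    apply hinj
    simp only [map_sum, DFinsupp.lsum_single, Submodule.subtype_apply]
    exact h
  intro i
  by_cases hi : i ∈ t
  · have h2 := congrFun (congrArg DFunLike.coe key) i
    rw [DFinsupp.finset_sum_apply, DFinsupp.finset_sum_apply] at h2
    have e1 : (∑ a ∈ t, (DFinsupp.single a (⟨u a, hu a⟩ : p a) : Π₀ i, ↥(p i)) i)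
        = ⟨u i, hu i⟩ :=
      (Finset.sum_eq_single_of_mem i hi fun j _ hj =>
        DFinsupp.single_eq_of_ne hj.symm).trans DFinsupp.single_eq_same
    have e2 : (∑ a ∈ t, (DFinsupp.single a (⟨v a, hv a⟩ : p a) : Π₀ i, ↥(p i)) i)
        = ⟨v i, hv i⟩ :=
      (Finset.sum_eq_single_of_mem i hi fun j _ hj =>
        DFinsupp.single_eq_of_ne hj.symm).trans DFinsupp.single_eq_same
    rw [e1, e2] at h2
    exact congrArg Subtype.val h2
  · rw [of_not_not (fun h => hi (hut i h)), of_not_not (fun h => hi (hvt i h))]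

private lemma cast_bilin {K I : Type*} [Field K] (V : I → Type*) [∀ i, AddCommGroup (V i)]
    [∀ i, Module K (V i)] (m : ∀ i₁ i₂ j : I, ℕ → (V i₁ →ₗ[K] V i₂ →ₗ[K] V j))
    {i₁ i₂ j j' : I} (h : j = j') (q : ℕ) (v : V i₁) (w : V i₂) :
    cast (congrArg V h) (m i₁ i₂ j q v w) = m i₁ i₂ j' q v w := by
  subst h; rfl


private lemma muB_expand2 {K I X : Type*} [Field K]
    (V : I → Type*) [∀ i, AddCommGroup (V i)] [∀ i, Module K (V i)]
    {B : Type*} [AddCommGroup B] [Module K B]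
    (μB : B →ₗ[K] B →ₗ[K] B) (εB : X → I) (τB : ∀ x : X, V (εB x) →ₗ[K] B)
    (d : I → I → I → ℕ)
    (m : ∀ i₁ i₂ j : I, ℕ → (V i₁ →ₗ[K] V i₂ →ₗ[K] V j))
    (dd : X → X → X → ℕ → K)
    (hμB : ∀ (x₁ x₂ : X) (v : V (εB x₁)) (w : V (εB x₂)),
      μB (τB x₁ v) (τB x₂ w)
        = ∑ᶠ y : X, ∑ q ∈ Finset.range (d (εB x₁) (εB x₂) (εB y)),
            dd x₁ x₂ y q • τB y (m (εB x₁) (εB x₂) (εB y) q v w))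
    (i₁ i₂ : I) (x₁ x₂ : X) (h₁ : εB x₁ = i₁) (h₂ : εB x₂ = i₂)
    (v : V i₁) (w : V i₂) :
    μB (τB x₁ (cast (congrArg V h₁.symm) v)) (τB x₂ (cast (congrArg V h₂.symm) w))
      = ∑ᶠ y : X, ∑ q ∈ Finset.range (d i₁ i₂ (εB y)),
          dd x₁ x₂ y q • τB y (m i₁ i₂ (εB y) q v w) := by
  subst h₁; subst h₂
  exact hμB x₁ x₂ v w

private lemma rhs_expand
    {K I R X : Type*} [Field K]
    (V : I → Type*) [∀ i, AddCommGroup (V i)] [∀ i, Module K (V i)]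
    {A B : Type*} [AddCommGroup A] [Module K A] [AddCommGroup B] [Module K B]
    (μB : B →ₗ[K] B →ₗ[K] B)
    (εA : R → I) (εB : X → I)
    (τA : ∀ r : R, V (εA r) →ₗ[K] A) (τB : ∀ x : X, V (εB x) →ₗ[K] B)
    (d : I → I → I → ℕ)
    (m : ∀ i₁ i₂ j : I, ℕ → (V i₁ →ₗ[K] V i₂ →ₗ[K] V j))
    (dd : X → X → X → ℕ → K)
    (hddfin : ∀ x₁ x₂ : X,
      {y : X | ∃ q < d (εB x₁) (εB x₂) (εB y), dd x₁ x₂ y q ≠ 0}.Finite)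
    (hμB : ∀ (x₁ x₂ : X) (v : V (εB x₁)) (w : V (εB x₂)),
      μB (τB x₁ v) (τB x₂ w)
        = ∑ᶠ y : X, ∑ q ∈ Finset.range (d (εB x₁) (εB x₂) (εB y)),
            dd x₁ x₂ y q • τB y (m (εB x₁) (εB x₂) (εB y) q v w))
    (f : X → R → K)
    (hffin : ∀ r : R, {x : X | f x r ≠ 0}.Finite)
    (hfsupp : ∀ (x : X) (r : R), f x r ≠ 0 → εB x = εA r)
    (φ : A →ₗ[K] B)
    (hφ : ∀ (r : R) (v : V (εA r)),
      φ (τA r v) = ∑ᶠ x : {x : X // εB x = εA r},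
            f x.1 r • τB x.1 (cast (congrArg V x.2.symm) v))
    (r₁ r₂ : R) (v : V (εA r₁)) (w : V (εA r₂)) :
    μB (φ (τA r₁ v)) (φ (τA r₂ w))
      = ∑ᶠ y : X, τB y (∑ q ∈ Finset.range (d (εA r₁) (εA r₂) (εB y)),
          (∑ᶠ x₁ : {x₁ : X // εB x₁ = εA r₁}, ∑ᶠ x₂ : {x₂ : X // εB x₂ = εA r₂},
              dd x₁.1 x₂.1 y q * f x₁.1 r₁ * f x₂.1 r₂)
            • m (εA r₁) (εA r₂) (εB y) q v w) := by
  classical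
  set T1 : Finset X := (hffin r₁).toFinset with hT1
  set T2 : Finset X := (hffin r₂).toFinset with hT2
  set YY : Finset X := T1.biUnion (fun x₁ => T2.biUnion (fun x₂ => (hddfin x₁ x₂).toFinset))
    with hYY
  have hmemT1 : ∀ x, f x r₁ ≠ 0 → x ∈ T1 := fun x hx => (hffin r₁).mem_toFinset.2 hx
  have hmemT2 : ∀ x, f x r₂ ≠ 0 → x ∈ T2 := fun x hx => (hffin r₂).mem_toFinset.2 hx
  have hmemY : ∀ x₁ x₂ y q, f x₁ r₁ ≠ 0 → f x₂ r₂ ≠ 0 →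
      q < d (εA r₁) (εA r₂) (εB y) → dd x₁ x₂ y q ≠ 0 → y ∈ YY := by
    intro x₁ x₂ y q hf1 hf2 hq hdd
    refine Finset.mem_biUnion.2 ⟨x₁, hmemT1 x₁ hf1, Finset.mem_biUnion.2
      ⟨x₂, hmemT2 x₂ hf2, (hddfin x₁ x₂).mem_toFinset.2 ⟨q, ?_, hdd⟩⟩⟩
    rw [hfsupp x₁ r₁ hf1, hfsupp x₂ r₂ hf2]
    exact hq
  -- expand φ on both arguments as subtype finset sums
  have e1 : φ (τA r₁ v) = ∑ x₁ ∈ T1.subtype (fun x => εB x = εA r₁),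
      f x₁.1 r₁ • τB x₁.1 (cast (congrArg V x₁.2.symm) v) := by
    rw [hφ]
    refine finsum_eq_sum_of_support_subset _ ?_
    intro x hx
    rw [Finset.mem_coe, Finset.mem_subtype]
    refine hmemT1 x.1 ?_
    intro h0
    exact hx (by simp [h0])
  have e2 : φ (τA r₂ w) = ∑ x₂ ∈ T2.subtype (fun x => εB x = εA r₂),
      f x₂.1 r₂ • τB x₂.1 (cast (congrArg V x₂.2.symm) w) := by
    rw [hφ]
    refine finsum_eq_sum_of_support_subset _ ?_
    intro x hx
    rw [Finset.mem_coe, Finset.mem_subtype]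
    refine hmemT2 x.1 ?_
    intro h0
    exact hx (by simp [h0])
  rw [e1, e2]
  conv_lhs => simp only [map_sum, map_smul, LinearMap.coe_sum, Finset.sum_apply,
    LinearMap.smul_apply, Finset.smul_sum]
  rw [Finset.sum_comm]
  calc
    ∑ x₁ ∈ T1.subtype (fun x => εB x = εA r₁), ∑ x₂ ∈ T2.subtype (fun x => εB x = εA r₂),
        f x₂.1 r₂ • f x₁.1 r₁ •
          μB (τB x₁.1 (cast (congrArg V x₁.2.symm) v)) (τB x₂.1 (cast (congrArg V x₂.2.symm) w))
      = ∑ x₁ ∈ T1.subtype (fun x => εB x = εA r₁), ∑ x₂ ∈ T2.subtype (fun x => εB x = εA r₂),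
          ∑ y ∈ YY, ∑ q ∈ Finset.range (d (εA r₁) (εA r₂) (εB y)),
            (dd x₁.1 x₂.1 y q * f x₁.1 r₁ * f x₂.1 r₂)
              • τB y (m (εA r₁) (εA r₂) (εB y) q v w) := by
        refine Finset.sum_congr rfl fun x₁ hx₁ => Finset.sum_congr rfl fun x₂ hx₂ => ?_
        have hf1 : f x₁.1 r₁ ≠ 0 := (hffin r₁).mem_toFinset.1 (Finset.mem_subtype.1 hx₁)
        have hf2 : f x₂.1 r₂ ≠ 0 := (hffin r₂).mem_toFinset.1 (Finset.mem_subtype.1 hx₂)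
        rw [muB_expand2 V μB εB τB d m dd hμB (εA r₁) (εA r₂) x₁.1 x₂.1 x₁.2 x₂.2 v w]
        rw [finsum_eq_sum_of_support_subset _ (s := YY) (by
          intro y hy
          obtain ⟨q, hqm, hne⟩ := Finset.exists_ne_zero_of_sum_ne_zero hy
          have hdd : dd x₁.1 x₂.1 y q ≠ 0 := by
            intro h0; exact hne (by simp [h0])
          exact Finset.mem_coe.2
            (hmemY x₁.1 x₂.1 y q hf1 hf2 (Finset.mem_range.1 hqm) hdd))]
        rw [Finset.smul_sum, Finset.smul_sum]
        refine Finset.sum_congr rfl fun y _ => ?_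
        rw [Finset.smul_sum, Finset.smul_sum]
        refine Finset.sum_congr rfl fun q _ => ?_
        rw [smul_smul, smul_smul]
        congr 1
        ring
    _ = ∑ x₁ ∈ T1, ∑ x₂ ∈ T2,
          ∑ y ∈ YY, ∑ q ∈ Finset.range (d (εA r₁) (εA r₂) (εB y)),
            (dd x₁ x₂ y q * f x₁ r₁ * f x₂ r₂)
              • τB y (m (εA r₁) (εA r₂) (εB y) q v w) := by
        refine Eq.trans (Finset.sum_congr rfl fun x₁ _ =>
          sum_subtype_eq_sum'' (fun x => εB x = εA r₂)
            (fun x₂ => ∑ y ∈ YY, ∑ q ∈ Finset.range (d (εA r₁) (εA r₂) (εB y)),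
              (dd x₁.1 x₂ y q * f x₁.1 r₁ * f x₂ r₂)
                • τB y (m (εA r₁) (εA r₂) (εB y) q v w)) T2 ?_) ?_
        · intro a _ hpa
          have hf0 : f a r₂ = 0 := by
            by_contra h0; exact hpa (hfsupp a r₂ h0)
          simp [hf0]
        · refine sum_subtype_eq_sum'' (fun x => εB x = εA r₁)
            (fun x₁ => ∑ x₂ ∈ T2, ∑ y ∈ YY, ∑ q ∈ Finset.range (d (εA r₁) (εA r₂) (εB y)),
              (dd x₁ x₂ y q * f x₁ r₁ * f x₂ r₂)
                • τB y (m (εA r₁) (εA r₂) (εB y) q v w)) T1 ?_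
          intro a _ hpa
          have hf0 : f a r₁ = 0 := by
            by_contra h0; exact hpa (hfsupp a r₁ h0)
          simp [hf0]
    _ = ∑ y ∈ YY, ∑ x₁ ∈ T1, ∑ x₂ ∈ T2, ∑ q ∈ Finset.range (d (εA r₁) (εA r₂) (εB y)),
            (dd x₁ x₂ y q * f x₁ r₁ * f x₂ r₂)
              • τB y (m (εA r₁) (εA r₂) (εB y) q v w) := by
        refine Eq.trans (Finset.sum_congr rfl fun x₁ _ => Finset.sum_comm) ?_
        exact Finset.sum_comm
    _ = ∑ y ∈ YY, ∑ q ∈ Finset.range (d (εA r₁) (εA r₂) (εB y)), ∑ x₁ ∈ T1, ∑ x₂ ∈ T2,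
            (dd x₁ x₂ y q * f x₁ r₁ * f x₂ r₂)
              • τB y (m (εA r₁) (εA r₂) (εB y) q v w) := by
        refine Finset.sum_congr rfl fun y _ => ?_
        refine Eq.trans (Finset.sum_congr rfl fun x₁ _ => Finset.sum_comm) ?_
        exact Finset.sum_comm
    _ = ∑ y ∈ YY, τB y (∑ q ∈ Finset.range (d (εA r₁) (εA r₂) (εB y)),
          (∑ᶠ x₁ : {x₁ : X // εB x₁ = εA r₁}, ∑ᶠ x₂ : {x₂ : X // εB x₂ = εA r₂},
              dd x₁.1 x₂.1 y q * f x₁.1 r₁ * f x₂.1 r₂)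
            • m (εA r₁) (εA r₂) (εB y) q v w) := by
        refine Finset.sum_congr rfl fun y _ => ?_
        rw [map_sum]
        refine Finset.sum_congr rfl fun q _ => ?_
        rw [map_smul]
        simp only [← Finset.sum_smul]
        congr 1
        have hinner : ∀ x₁ : X,
            (∑ᶠ x₂ : {x₂ : X // εB x₂ = εA r₂},
              dd x₁ x₂.1 y q * f x₁ r₁ * f x₂.1 r₂)
            = ∑ x₂ ∈ T2, dd x₁ x₂ y q * f x₁ r₁ * f x₂ r₂ := by
          intro x₁
          refine finsum_subtype_eq_sum'' (fun x => εB x = εA r₂)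
            (fun x₂ => dd x₁ x₂ y q * f x₁ r₁ * f x₂ r₂) T2 ?_ ?_
          · intro a _ hne
            refine hmemT2 a ?_
            intro h0; exact hne (by simp [h0])
          · intro a hpa
            have hf0 : f a r₂ = 0 := by
              by_contra h0; exact hpa (hfsupp a r₂ h0)
            simp [hf0]
        refine Eq.trans (Finset.sum_congr rfl fun x₁ _ => (hinner x₁).symm) ?_
        refine (finsum_subtype_eq_sum'' (fun x => εB x = εA r₁)
          (fun x₁ => ∑ᶠ x₂ : {x₂ : X // εB x₂ = εA r₂},
            dd x₁ x₂.1 y q * f x₁ r₁ * f x₂.1 r₂) T1 ?_ ?_).symm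
        · intro a _ hne
          refine hmemT1 a ?_
          intro h0
          refine hne (finsum_eq_zero_of_forall_eq_zero ?_)
          intro x₂; simp [h0]
        · intro a hpa
          have hf0 : f a r₁ = 0 := by
            by_contra h0; exact hpa (hfsupp a r₁ h0)
          refine finsum_eq_zero_of_forall_eq_zero ?_
          intro x₂; simp [hf0]
    _ = ∑ᶠ y : X, τB y (∑ q ∈ Finset.range (d (εA r₁) (εA r₂) (εB y)),
          (∑ᶠ x₁ : {x₁ : X // εB x₁ = εA r₁}, ∑ᶠ x₂ : {x₂ : X // εB x₂ = εA r₂},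
              dd x₁.1 x₂.1 y q * f x₁.1 r₁ * f x₂.1 r₂)
            • m (εA r₁) (εA r₂) (εB y) q v w) := by
        refine (finsum_eq_sum_of_support_subset _ ?_).symm
        intro y hy
        have hy' : (∑ q ∈ Finset.range (d (εA r₁) (εA r₂) (εB y)),
            (∑ᶠ x₁ : {x₁ : X // εB x₁ = εA r₁}, ∑ᶠ x₂ : {x₂ : X // εB x₂ = εA r₂},
                dd x₁.1 x₂.1 y q * f x₁.1 r₁ * f x₂.1 r₂)
              • m (εA r₁) (εA r₂) (εB y) q v w) ≠ 0 := by
          intro h0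
          apply hy
          simp only [Function.mem_support] at hy ⊢
          rw [h0, map_zero]
        obtain ⟨q, hqm, hterm⟩ := Finset.exists_ne_zero_of_sum_ne_zero hy'
        have hβ : (∑ᶠ x₁ : {x₁ : X // εB x₁ = εA r₁}, ∑ᶠ x₂ : {x₂ : X // εB x₂ = εA r₂},
            dd x₁.1 x₂.1 y q * f x₁.1 r₁ * f x₂.1 r₂) ≠ 0 := by
          intro h0; exact hterm (by simp [h0])
        obtain ⟨x₁, hx₁⟩ : ∃ x₁ : {x₁ : X // εB x₁ = εA r₁},
            (∑ᶠ x₂ : {x₂ : X // εB x₂ = εA r₂},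
              dd x₁.1 x₂.1 y q * f x₁.1 r₁ * f x₂.1 r₂) ≠ 0 := by
          by_contra hall
          push_neg at hall
          exact hβ (finsum_eq_zero_of_forall_eq_zero hall)
        obtain ⟨x₂, hx₂⟩ : ∃ x₂ : {x₂ : X // εB x₂ = εA r₂},
            dd x₁.1 x₂.1 y q * f x₁.1 r₁ * f x₂.1 r₂ ≠ 0 := by
          by_contra hall
          push_neg at hall
          exact hx₁ (finsum_eq_zero_of_forall_eq_zero hall)
        have hdd : dd x₁.1 x₂.1 y q ≠ 0 := fun h0 => hx₂ (by simp [h0])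
        have hf1 : f x₁.1 r₁ ≠ 0 := fun h0 => hx₂ (by simp [h0])
        have hf2 : f x₂.1 r₂ ≠ 0 := fun h0 => hx₂ (by simp [h0])
        exact Finset.mem_coe.2 (hmemY x₁.1 x₂.1 y q hf1 hf2 (Finset.mem_range.1 hqm) hdd)

private lemma lhs_expand
    {K I R X : Type*} [Field K]
    (V : I → Type*) [∀ i, AddCommGroup (V i)] [∀ i, Module K (V i)]
    {A B : Type*} [AddCommGroup A] [Module K A] [AddCommGroup B] [Module K B]
    (μA : A →ₗ[K] A →ₗ[K] A)
    (εA : R → I) (εB : X → I)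
    (τA : ∀ r : R, V (εA r) →ₗ[K] A) (τB : ∀ x : X, V (εB x) →ₗ[K] B)
    (d : I → I → I → ℕ)
    (m : ∀ i₁ i₂ j : I, ℕ → (V i₁ →ₗ[K] V i₂ →ₗ[K] V j))
    (c : R → R → R → ℕ → K)
    (hcfin : ∀ r₁ r₂ : R, {s : R | ∃ q < d (εA r₁) (εA r₂) (εA s), c r₁ r₂ s q ≠ 0}.Finite)
    (hμA : ∀ (r₁ r₂ : R) (v : V (εA r₁)) (w : V (εA r₂)),
      μA (τA r₁ v) (τA r₂ w)
        = ∑ᶠ s : R, ∑ q ∈ Finset.range (d (εA r₁) (εA r₂) (εA s)),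
            c r₁ r₂ s q • τA s (m (εA r₁) (εA r₂) (εA s) q v w))
    (f : X → R → K)
    (hffin : ∀ r : R, {x : X | f x r ≠ 0}.Finite)
    (hfsupp : ∀ (x : X) (r : R), f x r ≠ 0 → εB x = εA r)
    (φ : A →ₗ[K] B)
    (hφ : ∀ (r : R) (v : V (εA r)),
      φ (τA r v) = ∑ᶠ x : {x : X // εB x = εA r},
            f x.1 r • τB x.1 (cast (congrArg V x.2.symm) v))
    (r₁ r₂ : R) (v : V (εA r₁)) (w : V (εA r₂)) :
    φ (μA (τA r₁ v) (τA r₂ w))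
      = ∑ᶠ y : X, τB y (∑ q ∈ Finset.range (d (εA r₁) (εA r₂) (εB y)),
          (∑ᶠ s : {s : R // εA s = εB y}, c r₁ r₂ s.1 q * f y s.1)
            • m (εA r₁) (εA r₂) (εB y) q v w) := by
  classical
  set S : Finset R := (hcfin r₁ r₂).toFinset with hS
  set TT : Finset X := S.biUnion (fun s => (hffin s).toFinset) with hTT
  have hmemS : ∀ s q, q < d (εA r₁) (εA r₂) (εA s) → c r₁ r₂ s q ≠ 0 → s ∈ S := by
    intro s q hq hc
    rw [hS, Set.Finite.mem_toFinset]
    exact ⟨q, hq, hc⟩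
  have hmemTT : ∀ s ∈ S, ∀ x, f x s ≠ 0 → x ∈ TT := by
    intro s hs x hf
    exact Finset.mem_biUnion.2 ⟨s, hs, (hffin s).mem_toFinset.2 hf⟩
  -- step 1 : expand μA, push φ through, expand φ on components
  have e1 : φ (μA (τA r₁ v) (τA r₂ w))
      = ∑ s ∈ S, ∑ q ∈ Finset.range (d (εA r₁) (εA r₂) (εA s)),
          c r₁ r₂ s q • (∑ᶠ x : {x : X // εB x = εA s},
            f x.1 s • τB x.1 (cast (congrArg V x.2.symm)
              (m (εA r₁) (εA r₂) (εA s) q v w))) := by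
    rw [hμA]
    rw [finsum_eq_sum_of_support_subset _ (s := S) (by
      intro s hs
      obtain ⟨q, hqm, hne⟩ := Finset.exists_ne_zero_of_sum_ne_zero hs
      have hc : c r₁ r₂ s q ≠ 0 := by
        intro h0; rw [h0, zero_smul] at hne; exact hne rfl
      exact hmemS s q (Finset.mem_range.1 hqm) hc)]
    simp only [map_sum, map_smul, hφ]
  rw [e1]
  -- step 2 : replace the inner finsum by a finset sum over TT
  have e2 : ∀ s ∈ S, ∀ q : ℕ,
      (∑ᶠ x : {x : X // εB x = εA s},
        f x.1 s • τB x.1 (cast (congrArg V x.2.symm) (m (εA r₁) (εA r₂) (εA s) q v w)))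
      = ∑ x ∈ TT, f x s • τB x (m (εA r₁) (εA r₂) (εB x) q v w) := by
    intro s hs q
    have h1 : ∀ x : {x : X // εB x = εA s},
        f x.1 s • τB x.1 (cast (congrArg V x.2.symm) (m (εA r₁) (εA r₂) (εA s) q v w))
          = f x.1 s • τB x.1 (m (εA r₁) (εA r₂) (εB x.1) q v w) := fun x => by
      rw [cast_bilin V m x.2.symm]
    rw [finsum_congr h1]
    refine finsum_subtype_eq_sum'' (fun x : X => εB x = εA s)
      (fun x => f x s • τB x (m (εA r₁) (εA r₂) (εB x) q v w)) TT ?_ ?_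
    · intro a _ hga
      refine hmemTT s hs a ?_
      intro h0; exact hga (by simp [h0])
    · intro a hpa
      have : f a s = 0 := by
        by_contra h0; exact hpa (hfsupp a s h0)
      simp [this]
  calc
    ∑ s ∈ S, ∑ q ∈ Finset.range (d (εA r₁) (εA r₂) (εA s)),
        c r₁ r₂ s q • (∑ᶠ x : {x : X // εB x = εA s},
          f x.1 s • τB x.1 (cast (congrArg V x.2.symm) (m (εA r₁) (εA r₂) (εA s) q v w)))
      = ∑ s ∈ S, ∑ q ∈ Finset.range (d (εA r₁) (εA r₂) (εA s)), ∑ x ∈ TT,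
          (c r₁ r₂ s q * f x s) • τB x (m (εA r₁) (εA r₂) (εB x) q v w) := by
        refine Finset.sum_congr rfl fun s hs => Finset.sum_congr rfl fun q _ => ?_
        rw [e2 s hs q, Finset.smul_sum]
        simp only [smul_smul]
    _ = ∑ s ∈ S, ∑ x ∈ TT, ∑ q ∈ Finset.range (d (εA r₁) (εA r₂) (εB x)),
          (c r₁ r₂ s q * f x s) • τB x (m (εA r₁) (εA r₂) (εB x) q v w) := by
        refine Finset.sum_congr rfl fun s _ => ?_
        rw [Finset.sum_comm]
        refine Finset.sum_congr rfl fun x _ => ?_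
        by_cases h : εB x = εA s
        · rw [show d (εA r₁) (εA r₂) (εA s) = d (εA r₁) (εA r₂) (εB x) from by rw [h]]
        · have hf : f x s = 0 := by
            by_contra h0; exact h (hfsupp x s h0)
          simp [hf]
    _ = ∑ x ∈ TT, ∑ q ∈ Finset.range (d (εA r₁) (εA r₂) (εB x)), ∑ s ∈ S,
          (c r₁ r₂ s q * f x s) • τB x (m (εA r₁) (εA r₂) (εB x) q v w) := by
        rw [Finset.sum_comm]
        exact Finset.sum_congr rfl fun x _ => Finset.sum_comm
    _ = ∑ x ∈ TT, τB x (∑ q ∈ Finset.range (d (εA r₁) (εA r₂) (εB x)),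
          (∑ᶠ s : {s : R // εA s = εB x}, c r₁ r₂ s.1 q * f x s.1)
            • m (εA r₁) (εA r₂) (εB x) q v w) := by
        refine Finset.sum_congr rfl fun x _ => ?_
        rw [map_sum]
        refine Finset.sum_congr rfl fun q hq => ?_
        rw [← Finset.sum_smul, map_smul]
        congr 1
        refine (finsum_subtype_eq_sum'' (fun s : R => εA s = εB x)
          (fun s => c r₁ r₂ s q * f x s) S ?_ ?_).symm
        · intro s hp hne
          have hc : c r₁ r₂ s q ≠ 0 := fun h0 => hne (by simp [h0])
          refine hmemS s q ?_ hc
          rw [hp]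
          exact Finset.mem_range.1 hq
        · intro s hp
          have : f x s = 0 := by
            by_contra h0
            exact hp (hfsupp x s h0).symm
          simp [this]
    _ = ∑ᶠ y : X, τB y (∑ q ∈ Finset.range (d (εA r₁) (εA r₂) (εB y)),
          (∑ᶠ s : {s : R // εA s = εB y}, c r₁ r₂ s.1 q * f y s.1)
            • m (εA r₁) (εA r₂) (εB y) q v w) := by
        refine (finsum_eq_sum_of_support_subset _ ?_).symm
        intro y hy
        have hne : (∑ q ∈ Finset.range (d (εA r₁) (εA r₂) (εB y)),
            (∑ᶠ s : {s : R // εA s = εB y}, c r₁ r₂ s.1 q * f y s.1)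
              • m (εA r₁) (εA r₂) (εB y) q v w) ≠ 0 := by
          intro h0
          apply hy
          simp only [Function.mem_support] at hy ⊢
          rw [h0, map_zero]
        obtain ⟨q, hqm, hterm⟩ := Finset.exists_ne_zero_of_sum_ne_zero hne
        have hα : (∑ᶠ s : {s : R // εA s = εB y}, c r₁ r₂ s.1 q * f y s.1) ≠ 0 := by
          intro h0; rw [h0, zero_smul] at hterm; exact hterm rfl
        obtain ⟨s, hsne⟩ : ∃ s : {s : R // εA s = εB y}, c r₁ r₂ s.1 q * f y s.1 ≠ 0 := by
          by_contra hall
          push_neg at hall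
          exact hα (finsum_eq_zero_of_forall_eq_zero hall)
        have hc : c r₁ r₂ s.1 q ≠ 0 := fun h0 => hsne (by rw [h0, zero_mul])
        have hf : f y s.1 ≠ 0 := fun h0 => hsne (by rw [h0, mul_zero])
        refine Finset.mem_coe.2 (hmemTT s.1 ?_ y hf)
        refine hmemS s.1 q ?_ hc
        rw [s.2]
        exact Finset.mem_range.1 hqm


private lemma lhs_support
    {K I R X : Type*} [Field K]
    (V : I → Type*) [∀ i, AddCommGroup (V i)] [∀ i, Module K (V i)]
    {B : Type*} [AddCommGroup B] [Module K B]
    (εA : R → I) (εB : X → I)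
    (τB : ∀ x : X, V (εB x) →ₗ[K] B)
    (d : I → I → I → ℕ)
    (m : ∀ i₁ i₂ j : I, ℕ → (V i₁ →ₗ[K] V i₂ →ₗ[K] V j))
    (c : R → R → R → ℕ → K)
    (hcfin : ∀ r₁ r₂ : R, {s : R | ∃ q < d (εA r₁) (εA r₂) (εA s), c r₁ r₂ s q ≠ 0}.Finite)
    (f : X → R → K)
    (hffin : ∀ r : R, {x : X | f x r ≠ 0}.Finite)
    (r₁ r₂ : R) (v : V (εA r₁)) (w : V (εA r₂)) :
    (Function.support fun y : X => τB y (∑ q ∈ Finset.range (d (εA r₁) (εA r₂) (εB y)),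
        (∑ᶠ s : {s : R // εA s = εB y}, c r₁ r₂ s.1 q * f y s.1)
          • m (εA r₁) (εA r₂) (εB y) q v w)).Finite := by
  classical
  refine Set.Finite.subset (Set.Finite.biUnion (hcfin r₁ r₂) (fun s _ => hffin s)) ?_
  intro y hy
  have hne : (∑ q ∈ Finset.range (d (εA r₁) (εA r₂) (εB y)),
      (∑ᶠ s : {s : R // εA s = εB y}, c r₁ r₂ s.1 q * f y s.1)
        • m (εA r₁) (εA r₂) (εB y) q v w) ≠ 0 := by
    intro h0
    apply hy
    simp only [Function.mem_support] at hy ⊢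
    rw [h0, map_zero]
  obtain ⟨q, hqm, hterm⟩ := Finset.exists_ne_zero_of_sum_ne_zero hne
  have hα : (∑ᶠ s : {s : R // εA s = εB y}, c r₁ r₂ s.1 q * f y s.1) ≠ 0 := by
    intro h0; exact hterm (by simp [h0])
  obtain ⟨s, hsne⟩ : ∃ s : {s : R // εA s = εB y}, c r₁ r₂ s.1 q * f y s.1 ≠ 0 := by
    by_contra hall
    push_neg at hall
    exact hα (finsum_eq_zero_of_forall_eq_zero hall)
  have hc : c r₁ r₂ s.1 q ≠ 0 := fun h0 => hsne (by simp [h0])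
  have hf : f y s.1 ≠ 0 := fun h0 => hsne (by simp [h0])
  have hsmem : s.1 ∈ {s : R | ∃ q < d (εA r₁) (εA r₂) (εA s), c r₁ r₂ s q ≠ 0} :=
    ⟨q, by rw [s.2]; exact Finset.mem_range.1 hqm, hc⟩
  exact Set.mem_biUnion hsmem hf

private lemma rhs_support
    {K I R X : Type*} [Field K]
    (V : I → Type*) [∀ i, AddCommGroup (V i)] [∀ i, Module K (V i)]
    {B : Type*} [AddCommGroup B] [Module K B]
    (εA : R → I) (εB : X → I)
    (τB : ∀ x : X, V (εB x) →ₗ[K] B)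
    (d : I → I → I → ℕ)
    (m : ∀ i₁ i₂ j : I, ℕ → (V i₁ →ₗ[K] V i₂ →ₗ[K] V j))
    (dd : X → X → X → ℕ → K)
    (hddfin : ∀ x₁ x₂ : X,
      {y : X | ∃ q < d (εB x₁) (εB x₂) (εB y), dd x₁ x₂ y q ≠ 0}.Finite)
    (f : X → R → K)
    (hffin : ∀ r : R, {x : X | f x r ≠ 0}.Finite)
    (hfsupp : ∀ (x : X) (r : R), f x r ≠ 0 → εB x = εA r)
    (r₁ r₂ : R) (v : V (εA r₁)) (w : V (εA r₂)) :
    (Function.support fun y : X => τB y (∑ q ∈ Finset.range (d (εA r₁) (εA r₂) (εB y)),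
        (∑ᶠ x₁ : {x₁ : X // εB x₁ = εA r₁}, ∑ᶠ x₂ : {x₂ : X // εB x₂ = εA r₂},
            dd x₁.1 x₂.1 y q * f x₁.1 r₁ * f x₂.1 r₂)
          • m (εA r₁) (εA r₂) (εB y) q v w)).Finite := by
  classical
  refine Set.Finite.subset (Set.Finite.biUnion (hffin r₁) (fun x₁ _ =>
    Set.Finite.biUnion (hffin r₂) (fun x₂ _ => hddfin x₁ x₂))) ?_
  intro y hy
  have hne : (∑ q ∈ Finset.range (d (εA r₁) (εA r₂) (εB y)),
      (∑ᶠ x₁ : {x₁ : X // εB x₁ = εA r₁}, ∑ᶠ x₂ : {x₂ : X // εB x₂ = εA r₂},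
          dd x₁.1 x₂.1 y q * f x₁.1 r₁ * f x₂.1 r₂)
        • m (εA r₁) (εA r₂) (εB y) q v w) ≠ 0 := by
    intro h0
    apply hy
    simp only [Function.mem_support] at hy ⊢
    rw [h0, map_zero]
  obtain ⟨q, hqm, hterm⟩ := Finset.exists_ne_zero_of_sum_ne_zero hne
  have hβ : (∑ᶠ x₁ : {x₁ : X // εB x₁ = εA r₁}, ∑ᶠ x₂ : {x₂ : X // εB x₂ = εA r₂},
      dd x₁.1 x₂.1 y q * f x₁.1 r₁ * f x₂.1 r₂) ≠ 0 := by
    intro h0; exact hterm (by simp [h0])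
  obtain ⟨x₁, hx₁⟩ : ∃ x₁ : {x₁ : X // εB x₁ = εA r₁},
      (∑ᶠ x₂ : {x₂ : X // εB x₂ = εA r₂},
        dd x₁.1 x₂.1 y q * f x₁.1 r₁ * f x₂.1 r₂) ≠ 0 := by
    by_contra hall
    push_neg at hall
    exact hβ (finsum_eq_zero_of_forall_eq_zero hall)
  obtain ⟨x₂, hx₂⟩ : ∃ x₂ : {x₂ : X // εB x₂ = εA r₂},
      dd x₁.1 x₂.1 y q * f x₁.1 r₁ * f x₂.1 r₂ ≠ 0 := by
    by_contra hall
    push_neg at hall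
    exact hx₁ (finsum_eq_zero_of_forall_eq_zero hall)
  have hdd : dd x₁.1 x₂.1 y q ≠ 0 := fun h0 => hx₂ (by simp [h0])
  have hf1 : f x₁.1 r₁ ≠ 0 := fun h0 => hx₂ (by simp [h0])
  have hf2 : f x₂.1 r₂ ≠ 0 := fun h0 => hx₂ (by simp [h0])
  refine Set.mem_biUnion hf1 (Set.mem_biUnion hf2 ?_)
  refine ⟨q, ?_, hdd⟩
  rw [x₁.2, x₂.2]
  exact Finset.mem_range.1 hqm


/-- Let `G` be a group and `K` a field of characteristic zero.  Let
`𝔄` and `𝔅` be (not necessarily associative or unital) `K`-algebras — here encoded as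
`K`-modules `A`, `B` together with bilinear multiplications `μA`, `μB` — on which `G`
acts by algebra automorphisms (`ρA`, `ρB`), and let `(V i)_{i ∈ I}` be a family of
`K`-linear `G`-representations (`ρ`).  Suppose `A = ⊕_{r ∈ R} 𝔄_r` and
`B = ⊕_{x ∈ X} 𝔅_x` are internal direct sums of `G`-invariant subspaces, with
`G`-equivariant linear isomorphisms `τA r : V (εA r) ≅ 𝔄_r` and
`τB x : V (εB x) ≅ 𝔅_x` (encoded as injective equivariant linear maps whose ranges form
an internal direct sum decomposition).  For each `i₁ i₂ j` let
`(m i₁ i₂ j q)_{q < d i₁ i₂ j}` be a linearly independent family of `G`-equivariant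
bilinear maps `V i₁ → V i₂ → V j`.  Assume the multiplication `μA` expands on the
components of `A` with coefficients `c` (the `G`-table of `𝔄`), and `μB` expands on the
components of `B` with coefficients `dd` (the `G`-table of `𝔅`), each expansion having
only finitely many nonzero coefficients.  Let `φ : A →ₗ[K] B` be the `G`-equivariant
linear map determined on components by the `G`-matrix `f` (finitely supported in `x`
for each `r`, and supported on matching indices).  Then `φ` is an algebra homomorphism
iff for all `r₁ r₂ ∈ R`, `y ∈ X` and `q < d (εA r₁) (εA r₂) (εB y)`:
`∑_{s ∈ R_y} c r₁ r₂ s q * f y s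
  = ∑_{x₁ ∈ X_{r₁}} ∑_{x₂ ∈ X_{r₂}} dd x₁ x₂ y q * f x₁ r₁ * f x₂ r₂`,
where `R_y = {s | εA s = εB y}` and `X_r = {x | εB x = εA r}`. -/
theorem gTable_algebraHom_iff
    {K : Type*} [Field K] [CharZero K]
    {G : Type*} [Group G]
    {I R X : Type*} [DecidableEq R] [DecidableEq X]
    (V : I → Type*) [∀ i, AddCommGroup (V i)] [∀ i, Module K (V i)]
    (ρ : ∀ i, G →* (V i ≃ₗ[K] V i))
    {A B : Type*} [AddCommGroup A] [Module K A] [AddCommGroup B] [Module K B]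
    (μA : A →ₗ[K] A →ₗ[K] A) (μB : B →ₗ[K] B →ₗ[K] B)
    (ρA : G →* (A ≃ₗ[K] A)) (ρB : G →* (B ≃ₗ[K] B))
    (hρA : ∀ (g : G) (a b : A), ρA g (μA a b) = μA (ρA g a) (ρA g b))
    (hρB : ∀ (g : G) (a b : B), ρB g (μB a b) = μB (ρB g a) (ρB g b))
    (εA : R → I) (εB : X → I)
    (τA : ∀ r : R, V (εA r) →ₗ[K] A) (τB : ∀ x : X, V (εB x) →ₗ[K] B)
    (hτAinj : ∀ r, Function.Injective (τA r))
    (hτBinj : ∀ x, Function.Injective (τB x))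
    (hAdecomp : DirectSum.IsInternal fun r : R => LinearMap.range (τA r))
    (hBdecomp : DirectSum.IsInternal fun x : X => LinearMap.range (τB x))
    (hτAequiv : ∀ (r : R) (g : G) (v : V (εA r)), ρA g (τA r v) = τA r (ρ (εA r) g v))
    (hτBequiv : ∀ (x : X) (g : G) (v : V (εB x)), ρB g (τB x v) = τB x (ρ (εB x) g v))
    (d : I → I → I → ℕ)
    (m : ∀ i₁ i₂ j : I, ℕ → (V i₁ →ₗ[K] V i₂ →ₗ[K] V j))
    (hmequiv : ∀ (i₁ i₂ j : I) (q : ℕ), q < d i₁ i₂ j →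
      ∀ (g : G) (v : V i₁) (w : V i₂),
        m i₁ i₂ j q (ρ i₁ g v) (ρ i₂ g w) = ρ j g (m i₁ i₂ j q v w))
    (hmindep : ∀ i₁ i₂ j : I,
      LinearIndependent K fun q : Fin (d i₁ i₂ j) => m i₁ i₂ j (q : ℕ))
    (c : R → R → R → ℕ → K) (dd : X → X → X → ℕ → K)
    (hcfin : ∀ r₁ r₂ : R,
      {s : R | ∃ q < d (εA r₁) (εA r₂) (εA s), c r₁ r₂ s q ≠ 0}.Finite)
    (hddfin : ∀ x₁ x₂ : X,
      {y : X | ∃ q < d (εB x₁) (εB x₂) (εB y), dd x₁ x₂ y q ≠ 0}.Finite)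
    (hμA : ∀ (r₁ r₂ : R) (v : V (εA r₁)) (w : V (εA r₂)),
      μA (τA r₁ v) (τA r₂ w)
        = ∑ᶠ s : R, ∑ q ∈ Finset.range (d (εA r₁) (εA r₂) (εA s)),
            c r₁ r₂ s q • τA s (m (εA r₁) (εA r₂) (εA s) q v w))
    (hμB : ∀ (x₁ x₂ : X) (v : V (εB x₁)) (w : V (εB x₂)),
      μB (τB x₁ v) (τB x₂ w)
        = ∑ᶠ y : X, ∑ q ∈ Finset.range (d (εB x₁) (εB x₂) (εB y)),
            dd x₁ x₂ y q • τB y (m (εB x₁) (εB x₂) (εB y) q v w))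
    (f : X → R → K)
    (hffin : ∀ r : R, {x : X | f x r ≠ 0}.Finite)
    (hfsupp : ∀ (x : X) (r : R), f x r ≠ 0 → εB x = εA r)
    (φ : A →ₗ[K] B)
    (hφequiv : ∀ (g : G) (a : A), φ (ρA g a) = ρB g (φ a))
    (hφ : ∀ (r : R) (v : V (εA r)),
      φ (τA r v)
        = ∑ᶠ x : {x : X // εB x = εA r},
            f x.1 r • τB x.1 (cast (congrArg V x.2.symm) v)) :
    (∀ a b : A, φ (μA a b) = μB (φ a) (φ b))
      ↔ ∀ (r₁ r₂ : R) (y : X) (q : ℕ), q < d (εA r₁) (εA r₂) (εB y) →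
          (∑ᶠ s : {s : R // εA s = εB y}, c r₁ r₂ s.1 q * f y s.1)
            = ∑ᶠ x₁ : {x₁ : X // εB x₁ = εA r₁},
                ∑ᶠ x₂ : {x₂ : X // εB x₂ = εA r₂},
                  dd x₁.1 x₂.1 y q * f x₁.1 r₁ * f x₂.1 r₂ := by
  classical
  have lhs_eq := fun (r₁ r₂ : R) (v : V (εA r₁)) (w : V (εA r₂)) =>
    lhs_expand V μA εA εB τA τB d m c hcfin hμA f hffin hfsupp φ hφ r₁ r₂ v w
  have rhs_eq := fun (r₁ r₂ : R) (v : V (εA r₁)) (w : V (εA r₂)) =>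
    rhs_expand V μB εA εB τA τB d m dd hddfin hμB f hffin hfsupp φ hφ r₁ r₂ v w
  constructor
  · intro hhom r₁ r₂ y q hq
    have key : ∀ (v : V (εA r₁)) (w : V (εA r₂)),
        (∑ p ∈ Finset.range (d (εA r₁) (εA r₂) (εB y)),
          (∑ᶠ s : {s : R // εA s = εB y}, c r₁ r₂ s.1 p * f y s.1)
            • m (εA r₁) (εA r₂) (εB y) p v w)
        = ∑ p ∈ Finset.range (d (εA r₁) (εA r₂) (εB y)),
          (∑ᶠ x₁ : {x₁ : X // εB x₁ = εA r₁}, ∑ᶠ x₂ : {x₂ : X // εB x₂ = εA r₂},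
              dd x₁.1 x₂.1 y p * f x₁.1 r₁ * f x₂.1 r₂)
            • m (εA r₁) (εA r₂) (εB y) p v w := by
      intro v w
      have h3 : (∑ᶠ y' : X, τB y' (∑ p ∈ Finset.range (d (εA r₁) (εA r₂) (εB y')),
            (∑ᶠ s : {s : R // εA s = εB y'}, c r₁ r₂ s.1 p * f y' s.1)
              • m (εA r₁) (εA r₂) (εB y') p v w))
          = ∑ᶠ y' : X, τB y' (∑ p ∈ Finset.range (d (εA r₁) (εA r₂) (εB y')),
            (∑ᶠ x₁ : {x₁ : X // εB x₁ = εA r₁}, ∑ᶠ x₂ : {x₂ : X // εB x₂ = εA r₂},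
                dd x₁.1 x₂.1 y' p * f x₁.1 r₁ * f x₂.1 r₂)
              • m (εA r₁) (εA r₂) (εB y') p v w) := by
        rw [← lhs_eq r₁ r₂ v w, ← rhs_eq r₁ r₂ v w]
        exact hhom _ _
      have hufin := lhs_support V εA εB τB d m c hcfin f hffin r₁ r₂ v w
      have hvfin := rhs_support V εA εB τB d m dd hddfin f hffin hfsupp r₁ r₂ v w
      set u : X → B := fun y' => τB y' (∑ p ∈ Finset.range (d (εA r₁) (εA r₂) (εB y')),
        (∑ᶠ s : {s : R // εA s = εB y'}, c r₁ r₂ s.1 p * f y' s.1)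
          • m (εA r₁) (εA r₂) (εB y') p v w) with hu
      set vv : X → B := fun y' => τB y' (∑ p ∈ Finset.range (d (εA r₁) (εA r₂) (εB y')),
        (∑ᶠ x₁ : {x₁ : X // εB x₁ = εA r₁}, ∑ᶠ x₂ : {x₂ : X // εB x₂ = εA r₂},
            dd x₁.1 x₂.1 y' p * f x₁.1 r₁ * f x₂.1 r₂)
          • m (εA r₁) (εA r₂) (εB y') p v w) with hv
      set t : Finset X := hufin.toFinset ∪ hvfin.toFinset with ht
      have hut : ∀ y', u y' ≠ 0 → y' ∈ t :=
        fun y' h => Finset.mem_union_left _ (hufin.mem_toFinset.2 h)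
      have hvt : ∀ y', vv y' ≠ 0 → y' ∈ t :=
        fun y' h => Finset.mem_union_right _ (hvfin.mem_toFinset.2 h)
      have hsum : ∑ y' ∈ t, u y' = ∑ y' ∈ t, vv y' := by
        rw [← finsum_eq_sum_of_support_subset u (fun y' h => Finset.mem_coe.2 (hut y' h)),
          ← finsum_eq_sum_of_support_subset vv (fun y' h => Finset.mem_coe.2 (hvt y' h))]
        exact h3
      have hcomp := components_eq'' hBdecomp.submodule_iSupIndep u vv
        (fun y' => ⟨_, rfl⟩) (fun y' => ⟨_, rfl⟩) t hut hvt hsum y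
      exact hτBinj y hcomp
    -- linear independence of the m's
    have hzero : (∑ p : Fin (d (εA r₁) (εA r₂) (εB y)),
        ((∑ᶠ s : {s : R // εA s = εB y}, c r₁ r₂ s.1 p.1 * f y s.1)
          - (∑ᶠ x₁ : {x₁ : X // εB x₁ = εA r₁}, ∑ᶠ x₂ : {x₂ : X // εB x₂ = εA r₂},
              dd x₁.1 x₂.1 y p.1 * f x₁.1 r₁ * f x₂.1 r₂))
            • m (εA r₁) (εA r₂) (εB y) p.1) = 0 := by
      refine LinearMap.ext₂ fun v w => ?_
      simp only [LinearMap.coe_sum, Finset.sum_apply, LinearMap.smul_apply,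
        LinearMap.sub_apply, LinearMap.zero_apply, sub_smul, Finset.sum_sub_distrib]
      rw [Fin.sum_univ_eq_sum_range (fun p =>
          (∑ᶠ s : {s : R // εA s = εB y}, c r₁ r₂ s.1 p * f y s.1)
            • m (εA r₁) (εA r₂) (εB y) p v w),
        Fin.sum_univ_eq_sum_range (fun p =>
          (∑ᶠ x₁ : {x₁ : X // εB x₁ = εA r₁}, ∑ᶠ x₂ : {x₂ : X // εB x₂ = εA r₂},
              dd x₁.1 x₂.1 y p * f x₁.1 r₁ * f x₂.1 r₂)
            • m (εA r₁) (εA r₂) (εB y) p v w),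
        key v w, sub_self]
    have := Fintype.linearIndependent_iff.1 (hmindep (εA r₁) (εA r₂) (εB y)) _ hzero ⟨q, hq⟩
    exact sub_eq_zero.1 this
  · intro hcoef
    have hgen : ∀ (r₁ r₂ : R) (v : V (εA r₁)) (w : V (εA r₂)),
        φ (μA (τA r₁ v) (τA r₂ w)) = μB (φ (τA r₁ v)) (φ (τA r₂ w)) := by
      intro r₁ r₂ v w
      rw [lhs_eq r₁ r₂ v w, rhs_eq r₁ r₂ v w]
      refine finsum_congr fun y => ?_
      congr 1
      refine Finset.sum_congr rfl fun q hq => ?_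
      rw [hcoef r₁ r₂ y q (Finset.mem_range.1 hq)]
    intro a b
    have hmem : ∀ z : A, z ∈ ⨆ r, LinearMap.range (τA r) := by
      intro z
      rw [hAdecomp.submodule_iSup_eq_top]
      exact Submodule.mem_top
    refine Submodule.iSup_induction (motive := fun a => ∀ b : A, φ (μA a b) = μB (φ a) (φ b))
      _ (hmem a) ?_ ?_ ?_ b
    · intro r a' ha'
      obtain ⟨v, rfl⟩ := ha'
      intro b'
      refine Submodule.iSup_induction
        (motive := fun b => φ (μA (τA r v) b) = μB (φ (τA r v)) (φ b)) _ (hmem b') ?_ ?_ ?_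
      · intro r₂ b'' hb''
        obtain ⟨w, rfl⟩ := hb''
        exact hgen r r₂ v w
      · simp
      · intro x y hx hy
        simp [map_add, hx, hy]
    · intro b'
      simp
    · intro x y hx hy b'
      simp only [map_add, LinearMap.add_apply]
      rw [hx b', hy b']
end
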